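/- For all integers m₁ > 0, m₂ < 0 and m₃ ≥ 0, the 4×4 skew-symmetric integer matrix B(1) with rows (0, −m₁, −m₂, −m₃), (m₁, 0, m₁m₂−m₃, −m₂), (m₂, m₃−m₁m₂, 0, −m₁), (m₃, m₂, m₁, 0) has mutation period 2, i.e. μ₂(μ₁(B(1))) = ρ² B(1) ρ⁻²; moreover μ₁(B(1)) equals the matrix B(2) with rows (0, m₁, m₂, m₃), (−m₁, 0, −m₃, −m₂), (−m₂, m₃, 0, m₂m₃−m₁), (−m₃, m₂, m₁−m₂m₃, 0), and B(1) has mutation period 1 (μ₁(B(1)) = ρ B(1) ρ⁻¹) if and only if m₃ = m₁. -/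

import Mathlib

open Matrix

/-- The cyclic permutation matrix ρ: ρ_{i+1,i} = 1 (1-based), ρ_{1,N} = 1. -/
def rhoM (N : ℕ) : Matrix (Fin N) (Fin N) ℤ :=
  Matrix.of fun i j => if (i : ℕ) = ((j : ℕ) + 1) % N then 1 else 0

/-- The skew-rotation τ: equal to ρ except τ_{1,N} = −1. -/
def tauM (N : ℕ) : Matrix (Fin N) (Fin N) ℤ :=
  Matrix.of fun i j =>
    if (i : ℕ) = ((j : ℕ) + 1) % N then (if (j : ℕ) + 1 = N then -1 else 1) else 0

/-- Fomin–Zelevinsky matrix mutation at node `k`. -/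
def mutB {N : ℕ} (k : Fin N) (B : Matrix (Fin N) (Fin N) ℤ) : Matrix (Fin N) (Fin N) ℤ :=
  Matrix.of fun i j =>
    if i = k ∨ j = k then -B i j
    else B i j + (|B i k| * B k j + B i k * |B k j|) / 2

/-- Node `k` is a sink of `B` if all entries of column `k` are nonnegative. -/
def IsSink {N : ℕ} (k : Fin N) (B : Matrix (Fin N) (Fin N) ℤ) : Prop :=
  ∀ i, 0 ≤ B i k


/-- The general 4-node period 2 matrix `B(1)`. -/
def B1of (m₁ m₂ m₃ : ℤ) : Matrix (Fin 4) (Fin 4) ℤ :=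
  !![0, -m₁, -m₂, -m₃;
     m₁, 0, m₁ * m₂ - m₃, -m₂;
     m₂, m₃ - m₁ * m₂, 0, -m₁;
     m₃, m₂, m₁, 0]

/-- The matrix `B(2)` of the 4-node period 2 chain. -/
def B2of (m₁ m₂ m₃ : ℤ) : Matrix (Fin 4) (Fin 4) ℤ :=
  !![0, m₁, m₂, m₃;
     -m₁, 0, -m₃, -m₂;
     -m₂, m₃, 0, m₂ * m₃ - m₁;
     -m₃, m₂, m₁ - m₂ * m₃, 0]


lemma rho4 : rhoM 4 = !![0,0,0,1; 1,0,0,0; 0,1,0,0; 0,0,1,0] := by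
  ext i j; fin_cases i <;> fin_cases j <;>
    simp [rhoM, Matrix.cons_val_zero, Matrix.cons_val_one, vecHead, vecTail] <;> decide

lemma rho4_inv : (rhoM 4)⁻¹ = !![0,1,0,0; 0,0,1,0; 0,0,0,1; 1,0,0,0] := by
  apply Matrix.inv_eq_right_inv
  rw [rho4]
  ext i j; fin_cases i <;> fin_cases j <;>
    simp [Matrix.mul_apply, Fin.sum_univ_four, vecHead, vecTail]

set_option maxHeartbeats 1000000 in
/-- For `m₁ > 0`, `m₂ < 0`, `m₃ ≥ 0`, the matrix `B(1)` has mutation period 2, with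
`μ₁(B(1)) = B(2)`, and it has mutation period 1 iff `m₃ = m₁`. -/
theorem stmt16 (m₁ m₂ m₃ : ℤ) (h1 : 0 < m₁) (h2 : m₂ < 0) (h3 : 0 ≤ m₃) :
    mutB 1 (mutB 0 (B1of m₁ m₂ m₃)) = rhoM 4 ^ 2 * B1of m₁ m₂ m₃ * ((rhoM 4)⁻¹) ^ 2 ∧
    mutB 0 (B1of m₁ m₂ m₃) = B2of m₁ m₂ m₃ ∧
    (mutB 0 (B1of m₁ m₂ m₃) = rhoM 4 * B1of m₁ m₂ m₃ * (rhoM 4)⁻¹ ↔ m₃ = m₁) := by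
  have hd : ∀ a : ℤ, a * 2 / 2 = a := fun a => Int.mul_ediv_cancel a two_ne_zero
  have a1 : |m₁| = m₁ := abs_of_pos h1
  have a2 : |m₂| = -m₂ := abs_of_neg h2
  have a3 : |m₃| = m₃ := abs_of_nonneg h3
  have key2 : mutB 0 (B1of m₁ m₂ m₃) = B2of m₁ m₂ m₃ := by
    ext i j
    fin_cases i <;> fin_cases j <;>
      simp [mutB, B1of, B2of, a1, a2, a3, vecHead, vecTail] <;>
      ring_nf <;> simp [hd, Int.neg_ediv_of_dvd] <;> ring_nf
  have hC : rhoM 4 ^ 2 * B1of m₁ m₂ m₃ * ((rhoM 4)⁻¹) ^ 2 =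
      !![0, -m₁, m₂, m₃ - m₁ * m₂;
         m₁, 0, m₃, m₂;
         -m₂, -m₃, 0, -m₁;
         m₁ * m₂ - m₃, -m₂, m₁, 0] := by
    rw [rho4_inv, rho4]
    ext i j
    fin_cases i <;> fin_cases j <;>
      simp [Matrix.mul_apply, Fin.sum_univ_four, pow_two, B1of, vecHead, vecTail] <;> ring
  have hD : rhoM 4 * B1of m₁ m₂ m₃ * (rhoM 4)⁻¹ =
      !![0, m₃, m₂, m₁;
         -m₃, 0, -m₁, -m₂;
         -m₂, m₁, 0, m₁ * m₂ - m₃;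
         -m₁, m₂, m₃ - m₁ * m₂, 0] := by
    rw [rho4_inv, rho4]
    ext i j
    fin_cases i <;> fin_cases j <;>
      simp [Matrix.mul_apply, Fin.sum_univ_four, B1of, vecHead, vecTail] <;> ring
  refine ⟨?_, key2, ?_⟩
  · rw [key2, hC]
    ext i j
    fin_cases i <;> fin_cases j <;>
      simp [mutB, B2of, a1, a2, a3, vecHead, vecTail] <;>
      ring_nf <;> simp [hd, Int.neg_ediv_of_dvd] <;> ring_nf
  · rw [key2, hD]
    constructor
    · intro h
      have := congrFun (congrFun h 0) 1
      simpa [B2of] using this.symm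
    · rintro rfl
      ext i j
      fin_cases i <;> fin_cases j <;> simp [B2of, vecHead, vecTail] <;> ring
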